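/- Let r ≥ 2 be an integer. If G is a K_{r+1}-free graph on n ≥ 1 vertices, then the minimum degree satisfies δ(G) ≤ n − ⌈n/r⌉, i.e. δ(G) ≤ δ(T_r(n)). -/

import Mathlib

open SimpleGraph Matrix
open scoped Classical

/-- `G` contains no copy of `F`, i.e. no subgraph of `G` is isomorphic to `F`:
there is no injective graph homomorphism from `F` into `G`. -/
def IsFFree {α β : Type*} (F : SimpleGraph α) (G : SimpleGraph β) : Prop :=
  ¬ ∃ f : F →g G, Function.Injective f

/-- The real adjacency matrix of a graph on `Fin n`. -/
noncomputable def adjMat {n : ℕ} (G : SimpleGraph (Fin n)) : Matrix (Fin n) (Fin n) ℝ :=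
  Matrix.of fun i j => if G.Adj i j then 1 else 0

/-- The spectral radius of a graph: the largest real eigenvalue of its adjacency matrix. -/
noncomputable def specRad {n : ℕ} (G : SimpleGraph (Fin n)) : ℝ :=
  sSup {μ : ℝ | ∃ x : Fin n → ℝ, x ≠ 0 ∧ adjMat G *ᵥ x = μ • x}

/-- The edit distance between two graphs on the same `n`-element vertex set. -/
noncomputable def editDist {n : ℕ} (G H : SimpleGraph (Fin n)) : ℕ :=
  sInf {k : ℕ | ∃ H' : SimpleGraph (Fin n), Nonempty (H' ≃g H) ∧
    (symmDiff G.edgeSet H'.edgeSet).ncard = k}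

/-- `cliqueCount G s` is the number of copies of `K_s` in `G`. -/
noncomputable def cliqueCount {n : ℕ} (G : SimpleGraph (Fin n)) (s : ℕ) : ℕ :=
  {S : Finset (Fin n) | G.IsNClique s S}.ncard

/-- A graph is color-critical if deleting some edge decreases the chromatic number. -/
def ColorCritical {α : Type*} (F : SimpleGraph α) : Prop :=
  ∃ e ∈ F.edgeSet, (F.deleteEdges {e}).chromaticNumber < F.chromaticNumber

/-- The `p`-spectral radius of a graph on `Fin n`. -/
noncomputable def pSpecRad {n : ℕ} (p : ℝ) (G : SimpleGraph (Fin n)) : ℝ :=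
  sSup {t : ℝ | ∃ x : Fin n → ℝ, (∑ i, |x i| ^ p) = 1 ∧
    t = ∑ i, ∑ j, if G.Adj i j then x i * x j else 0}

/-- The minimum degree of a graph on `Fin n`. -/
noncomputable def minDeg {n : ℕ} (G : SimpleGraph (Fin n)) : ℕ :=
  sInf (Set.range fun v => {u | G.Adj v u}.ncard)

/-- The clique number of a graph. -/
noncomputable def cliqueNum {n : ℕ} (G : SimpleGraph (Fin n)) : ℕ :=
  sSup {k : ℕ | ∃ S : Finset (Fin n), G.IsNClique k S}

/-- `G` is `K_{r+1}`-saturated: it is `K_{r+1}`-free but adding any missing edge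
creates a copy of `K_{r+1}`. -/
def KSaturated (r : ℕ) {V : Type*} (G : SimpleGraph V) : Prop :=
  G.CliqueFree (r + 1) ∧
    ∀ v w : V, v ≠ w → ¬ G.Adj v w →
      ¬ (G ⊔ SimpleGraph.fromEdgeSet {s(v, w)}).CliqueFree (r + 1)

lemma ncard_adj_eq_degree {n : ℕ} (G : SimpleGraph (Fin n)) [DecidableRel G.Adj] (v : Fin n) :
    {u | G.Adj v u}.ncard = G.degree v := by
  have : {u | G.Adj v u} = ↑(G.neighborFinset v) := by ext u; simp
  rw [this, Set.ncard_coe_finset, card_neighborFinset_eq_degree]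

/-- Greedy common-neighborhood argument. -/
lemma key_bound {n r : ℕ} (hr : 1 ≤ r) (hn : 1 ≤ n) (G : SimpleGraph (Fin n))
    [DecidableRel G.Adj]
    (hG : G.CliqueFree (r + 1)) (d : ℕ) (hd : ∀ v, d ≤ G.degree v) :
    n + r * d ≤ r * n := by
  have hdn : d ≤ n := by
    have := hd ⟨0, hn⟩
    have h2 := G.degree_lt_card_verts ⟨0, hn⟩
    simp [Fintype.card_fin] at h2
    omega
  by_contra hcon
  push_neg at hcon
  have claim : ∀ i, i ≤ r → ∃ (S T : Finset (Fin n)),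
      G.IsNClique i S ∧ (∀ u ∈ T, ∀ s ∈ S, G.Adj s u) ∧
      n + i * d ≤ T.card + i * n := by
    intro i
    induction i with
    | zero =>
      intro _
      exact ⟨∅, Finset.univ, by simp, by simp, by simp⟩
    | succ i ih =>
      intro hir
      obtain ⟨S, T, hS, hT, hcard⟩ := ih (by omega)
      have hTpos : 0 < T.card := by
        -- i * n < n + i * d
        have h1 : i * n + (r - i) * d ≤ i * n + (r - i) * n :=
          Nat.add_le_add_left (Nat.mul_le_mul_left _ hdn) _
        have h2 : i * n + (r - i) * n = r * n := by
          rw [← add_mul]; congr 1; omega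
        have h3 : n + r * d = n + i * d + (r - i) * d := by
          rw [add_assoc, ← add_mul]; congr 2; omega
      -- i*n + (r-i)*d ≤ r*n < n + i*d + (r-i)*d
        have h4 : i * n + (r - i) * d < n + i * d + (r - i) * d := by
          calc i * n + (r - i) * d ≤ r * n := h2 ▸ h1
            _ < n + i * d + (r - i) * d := h3 ▸ hcon
        have h5 : i * n < n + i * d := Nat.lt_of_add_lt_add_right h4
        omega
      obtain ⟨v, hv⟩ := Finset.card_pos.mp hTpos
      have hvadj : ∀ s ∈ S, G.Adj s v := fun s hs => hT v hv s hs
      refine ⟨insert v S, T ∩ G.neighborFinset v,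
        hS.insert (fun b hb => (hvadj b hb).symm), ?_, ?_⟩
      · intro u hu s hs
        rcases Finset.mem_insert.mp hs with rfl | hs'
        · exact (G.mem_neighborFinset _ _).mp (Finset.mem_inter.mp hu).2
        · exact hT u (Finset.mem_inter.mp hu).1 s hs'
      · have hsplit : (T ∩ G.neighborFinset v).card + (T \ G.neighborFinset v).card
            = T.card := Finset.card_inter_add_card_sdiff T _
        have hsd : (T \ G.neighborFinset v).card ≤ n - G.degree v := by
          have h1 : T \ G.neighborFinset v ⊆ Finset.univ \ G.neighborFinset v :=
            Finset.sdiff_subset_sdiff (Finset.subset_univ T) le_rfl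
          have h2 := Finset.card_le_card h1
          rwa [Finset.card_sdiff_of_subset (Finset.subset_univ _), Finset.card_univ,
            Fintype.card_fin, card_neighborFinset_eq_degree] at h2
        have hdv := hd v
        have hdegn : G.degree v ≤ n := by
          have := G.degree_lt_card_verts v
          simp [Fintype.card_fin] at this; omega
        rw [Nat.succ_mul, Nat.succ_mul]
        -- n + i*d + d ≤ T'.card + i*n + n
        have hA : n + i * d ≤ T.card + i * n := hcard
        omega
  obtain ⟨S, T, hS, hT, hcard⟩ := claim r le_rfl
  have hTpos : 0 < T.card := by omega
  obtain ⟨v, hv⟩ := Finset.card_pos.mp hTpos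
  exact hG _ (hS.insert (fun b hb => (hT v hv b hb).symm))

lemma minDeg_le_bound {n r : ℕ} (hr : 2 ≤ r) (hn : 1 ≤ n) (G : SimpleGraph (Fin n))
    [DecidableRel G.Adj] (hG : G.CliqueFree (r + 1)) :
    minDeg G ≤ n - (n + r - 1) / r := by
  set d := minDeg G with hdmin
  have hd : ∀ v, d ≤ G.degree v := by
    intro v
    have h1 : d ≤ {u | G.Adj v u}.ncard := Nat.sInf_le ⟨v, rfl⟩
    rwa [ncard_adj_eq_degree] at h1
  have hkey := key_bound (by omega) hn G hG d hd
  obtain ⟨m, rfl⟩ : ∃ m, n = m + 1 := ⟨n - 1, by omega⟩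
  have hq : (m + 1 + r - 1) / r = m / r + 1 := by
    have : m + 1 + r - 1 = m + r := by omega
    rw [this, Nat.add_div_right _ (by omega)]
  rw [hq]
  have ha : m + 1 ≤ r * (m / r + 1) := by
    have h1 := Nat.div_add_mod m r
    have h2 : m % r < r := Nat.mod_lt _ (by omega)
    have : r * (m / r + 1) = r * (m / r) + r := by ring
    omega
  have hb : r * (m / r + 1) ≤ m + r := by
    have h1 := Nat.div_add_mod m r
    have : r * (m / r + 1) = r * (m / r) + r := by ring
    omega
  -- from hkey : (m+1) + r*d ≤ r*(m+1), show d + (m/r + 1) ≤ m + 1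
  have hsum : d + (m / r + 1) ≤ m + 1 := by
    by_contra hcc
    push_neg at hcc
    have h5 : r * (m + 2) ≤ r * (d + (m / r + 1)) := Nat.mul_le_mul_left r (by omega)
    have h6 : r * (d + (m / r + 1)) = r * d + r * (m / r + 1) := by ring
    have h7 : r * (m + 2) = r * (m + 1) + r := by ring
    -- r*(m+1) + r ≤ r*d + r*(m/r+1) ≤ r*d + m + r;  and m+1 + r*d ≤ r*(m+1)
    nlinarith [hkey, hb]
  omega

/-- Degree version of Turán's theorem. -/
theorem stmt_18 (r n : ℕ) (hr : 2 ≤ r) (hn : 1 ≤ n) (G : SimpleGraph (Fin n))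
    (hG : G.CliqueFree (r + 1)) :
    minDeg G ≤ n - (n + r - 1) / r ∧ minDeg G ≤ minDeg (turanGraph n r) := by
  classical
  have hmain : minDeg G ≤ n - (n + r - 1) / r := minDeg_le_bound hr hn G hG
  refine ⟨hmain, hmain.trans ?_⟩
  -- show n - (n+r-1)/r ≤ minDeg (turanGraph n r)
  have : Nonempty (Fin n) := ⟨⟨0, hn⟩⟩
  apply le_csInf (Set.range_nonempty _)
  rintro b ⟨v, rfl⟩
  show n - (n + r - 1) / r ≤ {u | (turanGraph n r).Adj v u}.ncard
  rw [ncard_adj_eq_degree]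
  -- degree of v in turanGraph
  have hC : (Finset.univ.filter (fun u : Fin n => (u : ℕ) % r = (v : ℕ) % r)).card
      ≤ (n + r - 1) / r := by
    have hq : (n + r - 1) / r = (n - 1) / r + 1 := by
      have h1 : n + r - 1 = (n - 1) + r := by omega
      rw [h1, Nat.add_div_right _ (by omega)]
    rw [hq]
    rw [← Finset.card_range ((n - 1) / r + 1)]
    apply Finset.card_le_card_of_injOn (fun u : Fin n => (u : ℕ) / r)
    · intro u _
      rw [Finset.mem_coe, Finset.mem_range]; dsimp only
      have hu : (u : ℕ) ≤ n - 1 := by omega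
      have h9 : (u : ℕ) / r ≤ (n - 1) / r := Nat.div_le_div_right (c := r) hu
      omega
    · intro u hu w hw huw
      simp only [Finset.mem_coe, Finset.mem_filter] at hu hw
      have h1 : (u : ℕ) / r = (w : ℕ) / r := huw
      have h2 : (u : ℕ) % r = (w : ℕ) % r := by rw [hu.2, hw.2]
      have : (u : ℕ) = (w : ℕ) := by
        have hu3 := Nat.div_add_mod (u : ℕ) r
        have hw3 := Nat.div_add_mod (w : ℕ) r
        rw [h1, h2] at hu3
        omega
      exact Fin.val_injective this
  have hdeg : (turanGraph n r).degree v
      = (Finset.univ.filter (fun u : Fin n => ¬ ((u : ℕ) % r = (v : ℕ) % r))).card := by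
    rw [← card_neighborFinset_eq_degree]
    congr 1
    ext u
    simp only [mem_neighborFinset, Finset.mem_filter, Finset.mem_univ, true_and, turanGraph_adj]
    exact ⟨fun h e => h e.symm, fun h e => h e.symm⟩
  have hsum := Finset.card_filter_add_card_filter_not
    (s := (Finset.univ : Finset (Fin n))) (p := fun u : Fin n => (u : ℕ) % r = (v : ℕ) % r)
  rw [Finset.card_univ, Fintype.card_fin] at hsum
  rw [hdeg]
  omega
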